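/- Fix R > 0, ε > 0, k > 0, τ̄ > 0 and define τ̂*, K_δ, τ̂, and h_τ̂(ξ,ν) = ‖ξ + τ̂(ξ,ν)·ν‖² − (2R)² as in the future-focused CBF construction, together with the relaxed future-focused barrier H(ξ,ν) = h_τ̂(ξ,ν) + α₀(h₀(ξ)), where h₀(ξ) = ‖ξ‖² − (2R)² and α₀ : ℝ → ℝ satisfies α₀(0) = 0. Let ξ, ν ∈ ℝ² with ν ≠ 0 satisfy ‖ξ‖ = 2R (so h₀(ξ) = 0), H(ξ,ν) = 0, and τ̂(ξ,ν) ≤ 2·τ̂*(ξ,ν). Then ⟪ξ,ν⟫ ≥ 0. -/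
import Mathlib


open RealInnerProductSpace

private lemma tanh_mono {a b : ℝ} (h : a ≤ b) : Real.tanh a ≤ Real.tanh b := by
  rw [Real.tanh_eq_sinh_div_cosh, Real.tanh_eq_sinh_div_cosh,
    div_le_div_iff₀ (Real.cosh_pos a) (Real.cosh_pos b)]
  have hs : Real.sinh (a - b) ≤ 0 := by
    have := Real.sinh_le_sinh.mpr (sub_nonpos.mpr h : a - b ≤ (0:ℝ))
    simpa using this
  rw [Real.sinh_sub] at hs
  linarith

private lemma neg_one_lt_tanh' (x : ℝ) : -1 < Real.tanh x := by
  rw [Real.tanh_eq_sinh_div_cosh, lt_div_iff₀ (Real.cosh_pos x)]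
  have := Real.sinh_add_cosh x
  have := Real.exp_pos x
  linarith

/-- The smooth switch `K_δ(s) = 1/2 + (1/2)·tanh(k(s − δ))`. -/
noncomputable def Ksw (k δ s : ℝ) : ℝ :=
  1 / 2 + 1 / 2 * Real.tanh (k * (s - δ))

/-- The regularized minimizing time `τ̂*(ξ,ν) = −⟪ξ,ν⟫/(‖ν‖² + ε)`. -/
noncomputable def tauHatStar (ε : ℝ) (ξ ν : EuclideanSpace ℝ (Fin 2)) : ℝ :=
  -⟪ξ, ν⟫ / (‖ν‖ ^ 2 + ε)

/-- The smoothed look-ahead time `τ̂ = τ̂*·K₀(τ̂*) + (τ̄ − τ̂*)·K_τ̄(τ̂*)`. -/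
noncomputable def tauHat (ε k τbar : ℝ) (ξ ν : EuclideanSpace ℝ (Fin 2)) : ℝ :=
  tauHatStar ε ξ ν * Ksw k 0 (tauHatStar ε ξ ν) +
    (τbar - tauHatStar ε ξ ν) * Ksw k τbar (tauHatStar ε ξ ν)

/-- The future-focused control barrier function `h_τ̂(ξ,ν) = ‖ξ + τ̂·ν‖² − (2R)²`. -/
noncomputable def hff (R ε k τbar : ℝ) (ξ ν : EuclideanSpace ℝ (Fin 2)) : ℝ :=
  ‖ξ + tauHat ε k τbar ξ ν • ν‖ ^ 2 - (2 * R) ^ 2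

/-- The nominal (physical) barrier `h₀(ξ) = ‖ξ‖² − (2R)²`. -/
noncomputable def h0 (R : ℝ) (ξ : EuclideanSpace ℝ (Fin 2)) : ℝ :=
  ‖ξ‖ ^ 2 - (2 * R) ^ 2

/-- On the simultaneous zero set of the relaxed future-focused barrier
`H = h_τ̂ + α₀(h₀)` and the physical barrier `h₀`, if `τ̂ ≤ 2τ̂*` then `⟪ξ,ν⟫ ≥ 0`. -/
theorem rffcbf_boundary_nondecreasing
    (R ε k τbar : ℝ) (hR : 0 < R) (hε : 0 < ε) (hk : 0 < k) (hτ : 0 < τbar)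
    (α₀ : ℝ → ℝ) (hα₀ : α₀ 0 = 0)
    (ξ ν : EuclideanSpace ℝ (Fin 2)) (hν : ν ≠ 0)
    (hbd : ‖ξ‖ = 2 * R)
    (hH : hff R ε k τbar ξ ν + α₀ (h0 R ξ) = 0)
    (h2 : tauHat ε k τbar ξ ν ≤ 2 * tauHatStar ε ξ ν) :
    ⟪ξ, ν⟫ ≥ 0 := by
  by_contra hneg
  push_neg at hneg
  set p : ℝ := ⟪ξ, ν⟫ with hp
  have hνn : (0:ℝ) < ‖ν‖ := norm_pos_iff.mpr hν
  have hνsq : (0:ℝ) < ‖ν‖ ^ 2 := by positivity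
  have hts : 0 < tauHatStar ε ξ ν := by
    unfold tauHatStar
    apply div_pos (by linarith) (by positivity)
  set t := tauHatStar ε ξ ν with htdef
  -- τ̂ > 0
  have hK0 : Ksw k 0 t ≥ Ksw k τbar t := by
    unfold Ksw
    have : Real.tanh (k * (t - τbar)) ≤ Real.tanh (k * (t - 0)) := by
      apply tanh_mono; nlinarith
    linarith
  have hKτpos : 0 < Ksw k τbar t := by
    unfold Ksw
    have := neg_one_lt_tanh' (k * (t - τbar))
    linarith
  have htau : 0 < tauHat ε k τbar ξ ν := by
    unfold tauHat
    rw [← htdef]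
    nlinarith
  -- h0 = 0 and hff = 0
  have h00 : h0 R ξ = 0 := by
    unfold h0; rw [hbd]; ring
  rw [h00, hα₀, add_zero] at hH
  unfold hff at hH
  set T := tauHat ε k τbar ξ ν with hT
  have hexp : ‖ξ + T • ν‖ ^ 2 = ‖ξ‖ ^ 2 + 2 * (T * p) + T ^ 2 * ‖ν‖ ^ 2 := by
    rw [norm_add_sq_real, real_inner_smul_right, ← hp, norm_smul, mul_pow,
      Real.norm_eq_abs, sq_abs]
  rw [hexp, hbd] at hH
  have hkey : 2 * p + T * ‖ν‖ ^ 2 = 0 := by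
    have : T * (2 * p + T * ‖ν‖ ^ 2) = 0 := by linear_combination hH
    rcases mul_eq_zero.mp this with h | h
    · linarith
    · exact h
  -- T = -2p/‖ν‖², and 2t = -2p/(‖ν‖²+ε) < T, contradicting h2
  have hTval : T = -2 * p / ‖ν‖ ^ 2 := by
    rw [eq_div_iff (ne_of_gt hνsq)]
    linarith
  have h2t : 2 * t = -2 * p / (‖ν‖ ^ 2 + ε) := by
    rw [htdef]; unfold tauHatStar; rw [← hp]; ring
  rw [hTval, h2t] at h2
  have hlt : -2 * p / (‖ν‖ ^ 2 + ε) < -2 * p / ‖ν‖ ^ 2 := by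
    apply div_lt_div_of_pos_left (by linarith) hνsq (by linarith)
  linarith
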